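/- arXiv:2002.11332 — 5 statements merged into one kernel-verified Lean document; each statement's English description precedes it below -/
import Mathlib

section
/- Multi-parameter regret decomposition (Lemma 4). Let p, k, T be positive integers, for each round t ∈ {1,…,T} and arm i ∈ {1,…,k} let x_i^t ∈ ℝ^p, and for each arm i let θ*_i ∈ ℝ^p. For each arm i and round t let e_i(t) ∈ {1,…,e_{i,max}} be the episode index of arm i at round t, and for each arm i and episode e let θ̂_i^{(e)} ∈ ℝ^p be an estimate. Suppose the arm i^t chosen in round t satisfies ⟨x_{i^t}^t, θ̂_{i^t}^{(e_{i^t}(t))}⟩ = max_{1≤i≤k} ⟨x_i^t, θ̂_i^{(e_i(t))}⟩, and let i*(t) be an index achieving max_{1≤i≤k} ⟨x_i^t, θ*_i⟩. Fix an integer t_min with 0 ≤ t_min ≤ T and define, for each arm i and episode e, T_{i,e} = #{t > t_min : i^t = i and e_i(t) = e} and T*_{i,e} = #{t > t_min : i*(t) = i, i^t ≠ i, and e_i(t) = e}. Let β ≥ 0 satisfy |⟨x_i^t, θ*_j⟩| ≤ β for all i, j, t and |⟨x_i^t, θ*_i − θ̂_i^{(e)}⟩| ≤ β‖θ*_i −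 θ̂_i^{(e)}‖₂ for all i, t, e. Then the regret Reg(T) = Σ_{t=1}^T ( ⟨x_{i*(t)}^t, θ*_{i*(t)}⟩ − ⟨x_{i^t}^t, θ*_{i^t}⟩ ) satisfies Reg(T) ≤ 2β·t_min + β·Σ_{i=1}^k Σ_{e=1}^{e_{i,max}} ( T_{i,e} + T*_{i,e} )·‖θ*_i − θ̂_i^{(e)}‖₂. -/
open scoped RealInnerProductSpace
open Finset

/-- **Multi-parameter regret decomposition (Lemma 4).**
Each arm `i` has its own parameter `θstar i` and per-arm episodic estimates
`θhat i e`; in round `t` arm `i` is in episode `ei i t ∈ {1,…,emax i}`, and the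
greedy algorithm chooses the arm maximizing the estimated reward.  With
`T_{i,e}` the number of rounds after `tmin` where arm `i` is chosen while in
episode `e`, and `T*_{i,e}` the number of rounds after `tmin` where arm `i` is
optimal but not chosen while in episode `e`, the regret is bounded by
`2 β tmin + β Σ_i Σ_e (T_{i,e} + T*_{i,e}) ‖θstar i − θhat i e‖`. -/
theorem multi_parameter_regret_decomposition
    (p k T : ℕ) (hp : 0 < p) (hk : 0 < k) (hT : 0 < T)
    (x : Fin k → ℕ → EuclideanSpace ℝ (Fin p))
    (θstar : Fin k → EuclideanSpace ℝ (Fin p))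
    (emax : Fin k → ℕ)
    (ei : Fin k → ℕ → ℕ)
    (hei : ∀ (i : Fin k) (t : ℕ), 1 ≤ t → t ≤ T → ei i t ∈ Finset.Icc 1 (emax i))
    (θhat : Fin k → ℕ → EuclideanSpace ℝ (Fin p))
    (it : ℕ → Fin k)
    (hgreedy : ∀ t : ℕ, 1 ≤ t → t ≤ T →
      ⟪x (it t) t, θhat (it t) (ei (it t) t)⟫ =
        Finset.univ.sup' (Finset.univ_nonempty_iff.mpr ⟨⟨0, hk⟩⟩)
          (fun i : Fin k => ⟪x i t, θhat i (ei i t)⟫))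
    (istar : ℕ → Fin k)
    (histar : ∀ t : ℕ, 1 ≤ t → t ≤ T →
      ⟪x (istar t) t, θstar (istar t)⟫ =
        Finset.univ.sup' (Finset.univ_nonempty_iff.mpr ⟨⟨0, hk⟩⟩)
          (fun i : Fin k => ⟪x i t, θstar i⟫))
    (tmin : ℕ) (htmin : tmin ≤ T)
    (β : ℝ) (hβ : 0 ≤ β)
    (hx1 : ∀ (i j : Fin k) (t : ℕ), 1 ≤ t → t ≤ T → |⟪x i t, θstar j⟫| ≤ β)
    (hx2 : ∀ (i : Fin k) (t e : ℕ), 1 ≤ t → t ≤ T →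
      |⟪x i t, θstar i - θhat i e⟫| ≤ β * ‖θstar i - θhat i e‖) :
    (∑ t ∈ Finset.Icc 1 T,
        (⟪x (istar t) t, θstar (istar t)⟫ - ⟪x (it t) t, θstar (it t)⟫))
      ≤ 2 * β * (tmin : ℝ)
        + β * ∑ i : Fin k, ∑ e ∈ Finset.Icc 1 (emax i),
            ((((Finset.Icc (tmin + 1) T).filter
                  (fun t => it t = i ∧ ei i t = e)).card
              + ((Finset.Icc (tmin + 1) T).filter
                  (fun t => istar t = i ∧ it t ≠ i ∧ ei i t = e)).card : ℝ))
              * ‖θstar i - θhat i e‖ := by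
  classical
  set f : ℕ → ℝ := fun t => ‖θstar (it t) - θhat (it t) (ei (it t) t)‖ with hf
  set g : ℕ → ℝ := fun t =>
    if it t = istar t then 0 else ‖θstar (istar t) - θhat (istar t) (ei (istar t) t)‖ with hg
  -- pointwise bound after tmin
  have key : ∀ t ∈ Finset.Icc (tmin + 1) T,
      ⟪x (istar t) t, θstar (istar t)⟫ - ⟪x (it t) t, θstar (it t)⟫ ≤ β * (f t + g t) := by
    intro t ht
    rw [Finset.mem_Icc] at ht
    have ht1 : 1 ≤ t := le_trans (Nat.le_add_left 1 tmin) ht.1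
    have ht2 : t ≤ T := ht.2
    rcases eq_or_ne (it t) (istar t) with h | h
    · have hg0 : g t = 0 := if_pos h
      rw [h, sub_self, hg0, add_zero]
      exact mul_nonneg hβ (norm_nonneg _)
    · have hgt : g t = ‖θstar (istar t) - θhat (istar t) (ei (istar t) t)‖ := if_neg h
      have h1 : ⟪x (istar t) t, θstar (istar t) - θhat (istar t) (ei (istar t) t)⟫
          ≤ β * ‖θstar (istar t) - θhat (istar t) (ei (istar t) t)‖ :=
        le_trans (le_abs_self _) (hx2 _ _ _ ht1 ht2)
      have h2 : -⟪x (it t) t, θstar (it t) - θhat (it t) (ei (it t) t)⟫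
          ≤ β * ‖θstar (it t) - θhat (it t) (ei (it t) t)‖ :=
        le_trans (neg_le_abs _) (hx2 _ _ _ ht1 ht2)
      have h3 : ⟪x (istar t) t, θhat (istar t) (ei (istar t) t)⟫
          ≤ ⟪x (it t) t, θhat (it t) (ei (it t) t)⟫ := by
        rw [hgreedy t ht1 ht2]
        exact Finset.le_sup' (fun i : Fin k => ⟪x i t, θhat i (ei i t)⟫) (Finset.mem_univ _)
      rw [inner_sub_right] at h1 h2
      rw [hgt, hf]
      simp only
      nlinarith [h1, h2, h3]
  -- split the sum
  have hIcc : Finset.Icc 1 T = Finset.Ioc 0 T := by rw [← Finset.Icc_add_one_left_eq_Ioc]; rfl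
  have hIcc2 : Finset.Icc (tmin + 1) T = Finset.Ioc tmin T := by rw [← Finset.Icc_add_one_left_eq_Ioc]
  have hsplit :
      (∑ t ∈ Finset.Icc 1 T,
          (⟪x (istar t) t, θstar (istar t)⟫ - ⟪x (it t) t, θstar (it t)⟫))
        = (∑ t ∈ Finset.Icc 1 tmin,
            (⟪x (istar t) t, θstar (istar t)⟫ - ⟪x (it t) t, θstar (it t)⟫))
          + ∑ t ∈ Finset.Icc (tmin + 1) T,
            (⟪x (istar t) t, θstar (istar t)⟫ - ⟪x (it t) t, θstar (it t)⟫) := by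
    rw [hIcc, hIcc2, ← Finset.Icc_add_one_left_eq_Ioc]
    exact (Finset.sum_Ioc_consecutive _ (Nat.zero_le tmin) htmin).symm
  -- first part
  have S1 : (∑ t ∈ Finset.Icc 1 tmin,
        (⟪x (istar t) t, θstar (istar t)⟫ - ⟪x (it t) t, θstar (it t)⟫))
      ≤ 2 * β * (tmin : ℝ) := by
    have : ∀ t ∈ Finset.Icc 1 tmin,
        ⟪x (istar t) t, θstar (istar t)⟫ - ⟪x (it t) t, θstar (it t)⟫ ≤ 2 * β := by
      intro t ht
      rw [Finset.mem_Icc] at ht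
      have ht2 : t ≤ T := le_trans ht.2 htmin
      have a1 := hx1 (istar t) (istar t) t ht.1 ht2
      have a2 := hx1 (it t) (it t) t ht.1 ht2
      rw [abs_le] at a1 a2
      linarith [a1.2, a2.1]
    calc (∑ t ∈ Finset.Icc 1 tmin,
            (⟪x (istar t) t, θstar (istar t)⟫ - ⟪x (it t) t, θstar (it t)⟫))
        ≤ ∑ t ∈ Finset.Icc 1 tmin, (2 * β) := Finset.sum_le_sum this
      _ = (tmin : ℝ) * (2 * β) := by
          rw [Finset.sum_const, Nat.card_Icc]; simp [nsmul_eq_mul]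
      _ = 2 * β * (tmin : ℝ) := by ring
  -- second part
  have S2 : (∑ t ∈ Finset.Icc (tmin + 1) T,
        (⟪x (istar t) t, θstar (istar t)⟫ - ⟪x (it t) t, θstar (it t)⟫))
      ≤ β * ∑ t ∈ Finset.Icc (tmin + 1) T, (f t + g t) := by
    rw [Finset.mul_sum]
    exact Finset.sum_le_sum key
  -- double counting identity
  have S3 : (∑ t ∈ Finset.Icc (tmin + 1) T, (f t + g t))
      = ∑ i : Fin k, ∑ e ∈ Finset.Icc 1 (emax i),
          ((((Finset.Icc (tmin + 1) T).filter
                (fun t => it t = i ∧ ei i t = e)).card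
            + ((Finset.Icc (tmin + 1) T).filter
                (fun t => istar t = i ∧ it t ≠ i ∧ ei i t = e)).card : ℝ))
            * ‖θstar i - θhat i e‖ := by
    have hrw : ∀ (i : Fin k) (e : ℕ),
        ((((Finset.Icc (tmin + 1) T).filter
              (fun t => it t = i ∧ ei i t = e)).card
          + ((Finset.Icc (tmin + 1) T).filter
              (fun t => istar t = i ∧ it t ≠ i ∧ ei i t = e)).card : ℝ))
          * ‖θstar i - θhat i e‖
        = (∑ t ∈ Finset.Icc (tmin + 1) T,
            ((if it t = i ∧ ei i t = e then ‖θstar i - θhat i e‖ else 0)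
             + (if istar t = i ∧ it t ≠ i ∧ ei i t = e then ‖θstar i - θhat i e‖ else 0))) := by
      intro i e
      rw [Finset.sum_add_distrib, ← Finset.sum_filter, ← Finset.sum_filter,
        Finset.sum_const, Finset.sum_const]
      simp [nsmul_eq_mul]
      ring
    calc (∑ t ∈ Finset.Icc (tmin + 1) T, (f t + g t))
        = ∑ t ∈ Finset.Icc (tmin + 1) T,
            ∑ i : Fin k, ∑ e ∈ Finset.Icc 1 (emax i),
              ((if it t = i ∧ ei i t = e then ‖θstar i - θhat i e‖ else 0)
               + (if istar t = i ∧ it t ≠ i ∧ ei i t = e then ‖θstar i - θhat i e‖ else 0)) := by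
          apply Finset.sum_congr rfl
          intro t ht
          rw [Finset.mem_Icc] at ht
          have ht1 : 1 ≤ t := le_trans (Nat.le_add_left 1 tmin) ht.1
          have ht2 : t ≤ T := ht.2
          have hA : (∑ i : Fin k, ∑ e ∈ Finset.Icc 1 (emax i),
              (if it t = i ∧ ei i t = e then ‖θstar i - θhat i e‖ else 0)) = f t := by
            rw [Finset.sum_eq_single (it t)]
            · have hmem := hei (it t) t ht1 ht2
              calc (∑ e ∈ Finset.Icc 1 (emax (it t)),
                    (if it t = it t ∧ ei (it t) t = e then ‖θstar (it t) - θhat (it t) e‖ else 0))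
                  = ∑ e ∈ Finset.Icc 1 (emax (it t)),
                    (if ei (it t) t = e then ‖θstar (it t) - θhat (it t) e‖ else 0) := by
                    apply Finset.sum_congr rfl; intro e _; simp
                _ = f t := by rw [Finset.sum_ite_eq, if_pos hmem]
            · intro b _ hb
              apply Finset.sum_eq_zero
              intro e _
              exact if_neg (fun hcon => hb hcon.1.symm)
            · intro hcon; exact absurd (Finset.mem_univ (it t)) hcon
          have hB : (∑ i : Fin k, ∑ e ∈ Finset.Icc 1 (emax i),
              (if istar t = i ∧ it t ≠ i ∧ ei i t = e then ‖θstar i - θhat i e‖ else 0)) = g t := by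
            rw [Finset.sum_eq_single (istar t)]
            · rcases eq_or_ne (it t) (istar t) with h | h
              · have hg0 : g t = 0 := if_pos h
                rw [hg0]
                apply Finset.sum_eq_zero
                intro e _
                exact if_neg (fun hcon => hcon.2.1 h)
              · have hgt : g t = ‖θstar (istar t) - θhat (istar t) (ei (istar t) t)‖ := if_neg h
                have hmem := hei (istar t) t ht1 ht2
                calc (∑ e ∈ Finset.Icc 1 (emax (istar t)),
                      (if istar t = istar t ∧ it t ≠ istar t ∧ ei (istar t) t = e
                        then ‖θstar (istar t) - θhat (istar t) e‖ else 0))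
                    = ∑ e ∈ Finset.Icc 1 (emax (istar t)),
                      (if ei (istar t) t = e then ‖θstar (istar t) - θhat (istar t) e‖ else 0) := by
                      apply Finset.sum_congr rfl; intro e _; simp [h]
                  _ = g t := by rw [Finset.sum_ite_eq, if_pos hmem, hgt]
            · intro b _ hb
              apply Finset.sum_eq_zero
              intro e _
              exact if_neg (fun hcon => hb hcon.1.symm)
            · intro hcon; exact absurd (Finset.mem_univ (istar t)) hcon
          rw [Finset.sum_add_distrib] at *
          rw [show (∑ i : Fin k, ∑ e ∈ Finset.Icc 1 (emax i),
              ((if it t = i ∧ ei i t = e then ‖θstar i - θhat i e‖ else 0)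
               + (if istar t = i ∧ it t ≠ i ∧ ei i t = e then ‖θstar i - θhat i e‖ else 0)))
            = (∑ i : Fin k, ∑ e ∈ Finset.Icc 1 (emax i),
              (if it t = i ∧ ei i t = e then ‖θstar i - θhat i e‖ else 0))
              + (∑ i : Fin k, ∑ e ∈ Finset.Icc 1 (emax i),
              (if istar t = i ∧ it t ≠ i ∧ ei i t = e then ‖θstar i - θhat i e‖ else 0)) from by
              rw [← Finset.sum_add_distrib]
              apply Finset.sum_congr rfl
              intro i _
              rw [← Finset.sum_add_distrib]]
          rw [hA, hB]
      _ = ∑ i : Fin k, ∑ e ∈ Finset.Icc 1 (emax i),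
            ∑ t ∈ Finset.Icc (tmin + 1) T,
              ((if it t = i ∧ ei i t = e then ‖θstar i - θhat i e‖ else 0)
               + (if istar t = i ∧ it t ≠ i ∧ ei i t = e then ‖θstar i - θhat i e‖ else 0)) := by
          rw [Finset.sum_comm]
          apply Finset.sum_congr rfl
          intro i _
          rw [Finset.sum_comm]
      _ = _ := by
          apply Finset.sum_congr rfl
          intro i _
          apply Finset.sum_congr rfl
          intro e _
          exact (hrw i e).symm
  rw [hsplit, ← S3]
  have := add_le_add S1 S2
  linarith
end

section
/- Margin condition (Lemma 5, core inequality). Let σ > 0 and let η be a real random variable with the Gaussian distribution N(0, σ²). Then for every r ≥ σ, P(η ≥ r + σ²/r) ≥ (1/4)·e^{−3/2}·P(η ≥ r); in particular, P(η ≥ r + σ²/r | η ≥ r) ≥ 1/20. -/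
open MeasureTheory ProbabilityTheory

open Set Real

section aux
variable (σ : ℝ)

private noncomputable def sfun (x : ℝ) : ℝ := Real.sqrt (x ^ 2 + 3 * σ ^ 2)

private lemma test (σ : ℝ) (hσ : 0 < σ) :
    Continuous (gaussianPDFReal 0 ⟨σ ^ 2, sq_nonneg σ⟩) := by
  unfold gaussianPDFReal
  exact continuous_const.mul (Real.continuous_exp.comp
    ((((continuous_id.sub continuous_const).pow 2).neg).div_const _))

private lemma sfun_sq (σ : ℝ) (hσ : 0 < σ) (x : ℝ) : sfun σ x ^ 2 = x ^ 2 + 3 * σ ^ 2 :=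
  Real.sq_sqrt (by positivity)

private lemma sfun_pos (σ : ℝ) (hσ : 0 < σ) (x : ℝ) : 0 < sfun σ x :=
  Real.sqrt_pos.mpr (by positivity)

private lemma pdf_sfun (σ : ℝ) (hσ : 0 < σ) (x : ℝ) :
    gaussianPDFReal 0 ⟨σ ^ 2, sq_nonneg σ⟩ (sfun σ x)
      = Real.exp (-(3 / 2)) * gaussianPDFReal 0 ⟨σ ^ 2, sq_nonneg σ⟩ x := by
  have hv' : ((⟨σ ^ 2, sq_nonneg σ⟩ : NNReal) : ℝ) = σ ^ 2 := rfl
  simp only [gaussianPDFReal, sub_zero, hv']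
  simp only [show ∀ h : 0 ≤ σ ^ 2, NNReal.toReal ⟨σ ^ 2, h⟩ = σ ^ 2 from fun _ => rfl]
  rw [mul_left_comm, ← Real.exp_add]
  congr 1
  rw [sfun_sq σ hσ]
  have : σ ^ 2 ≠ 0 := by positivity
  field_simp
  ring
end aux

private lemma cov_lemma (σ : ℝ) (hσ : 0 < σ) (r : ℝ) (hr : σ ≤ r) :
    ∫ x in Ioi r,
        gaussianPDFReal 0 ⟨σ ^ 2, sq_nonneg σ⟩ (sfun σ x) * (x / sfun σ x)
      = ∫ u in Ioi (sfun σ r), gaussianPDFReal 0 ⟨σ ^ 2, sq_nonneg σ⟩ u := by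
  have hpdfc := test σ hσ
  have hscont : Continuous (sfun σ) :=
    Real.continuous_sqrt.comp (by continuity)
  have hff' : ∀ x ∈ Ioi r, HasDerivWithinAt (sfun σ) (x / sfun σ x) (Ioi x) x := by
    intro x _
    have h1 : HasDerivAt (fun y : ℝ => y ^ 2 + 3 * σ ^ 2) (2 * x) x := by
      simpa using ((hasDerivAt_pow 2 x).add_const (3 * σ ^ 2))
    have h2 := h1.sqrt (by positivity)
    have : 2 * x / (2 * Real.sqrt (x ^ 2 + 3 * σ ^ 2)) = x / sfun σ x := by
      rw [sfun]
      rw [mul_div_mul_left _ _ (two_ne_zero)]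
    rw [this] at h2
    exact h2.hasDerivWithinAt
  have hbound : ∀ x : ℝ, ‖gaussianPDFReal 0 ⟨σ ^ 2, sq_nonneg σ⟩ (sfun σ x) * (x / sfun σ x)‖
      ≤ ‖gaussianPDFReal 0 ⟨σ ^ 2, sq_nonneg σ⟩ x‖ := by
    intro x
    have hpos := sfun_pos σ hσ x
    have hpdf_nonneg := gaussianPDFReal_nonneg (0:ℝ) (⟨σ ^ 2, sq_nonneg σ⟩ : NNReal) x
    have h1 : |x / sfun σ x| ≤ 1 := by
      rw [abs_div, abs_of_pos hpos, div_le_one hpos]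
      have : |x| = Real.sqrt (x ^ 2) := (Real.sqrt_sq_eq_abs x).symm
      rw [this, sfun]
      exact Real.sqrt_le_sqrt (by nlinarith)
    rw [norm_mul, pdf_sfun σ hσ, Real.norm_eq_abs, Real.norm_eq_abs, Real.norm_eq_abs]
    calc |Real.exp (-(3/2)) * gaussianPDFReal 0 ⟨σ ^ 2, sq_nonneg σ⟩ x| * |x / sfun σ x|
        ≤ |Real.exp (-(3/2)) * gaussianPDFReal 0 ⟨σ ^ 2, sq_nonneg σ⟩ x| * 1 :=
          mul_le_mul_of_nonneg_left h1 (abs_nonneg _)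
      _ = |Real.exp (-(3/2))| * |gaussianPDFReal 0 ⟨σ ^ 2, sq_nonneg σ⟩ x| := by
          rw [mul_one, abs_mul]
      _ ≤ 1 * |gaussianPDFReal 0 ⟨σ ^ 2, sq_nonneg σ⟩ x| := by
          gcongr
          rw [abs_of_pos (Real.exp_pos _)]
          exact Real.exp_le_one_iff.mpr (by norm_num)
      _ = _ := one_mul _
  have hg2 : IntegrableOn
      (fun x => (gaussianPDFReal 0 ⟨σ ^ 2, sq_nonneg σ⟩ ∘ sfun σ) x * (x / sfun σ x))
      (Ici r) := by
    refine (Integrable.mono (integrable_gaussianPDFReal 0 _)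
      ((hpdfc.comp hscont).mul (continuous_id.div hscont
        fun x => (sfun_pos σ hσ x).ne')).aestronglyMeasurable
      (ae_of_all _ hbound)).integrableOn
  have := integral_comp_mul_deriv_Ioi (f := sfun σ) (f' := fun x => x / sfun σ x)
    (g := gaussianPDFReal 0 ⟨σ ^ 2, sq_nonneg σ⟩) (a := r)
    hscont.continuousOn
    (Filter.tendsto_atTop_mono' Filter.atTop (by
      filter_upwards [Filter.eventually_ge_atTop (0:ℝ)] with x hx
      calc x = Real.sqrt (x ^ 2) := by rw [Real.sqrt_sq hx]
        _ ≤ sfun σ x := Real.sqrt_le_sqrt (by nlinarith)) Filter.tendsto_id)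
    hff'
    hpdfc.continuousOn
    ((integrable_gaussianPDFReal 0 _).integrableOn)
    hg2
  exact this

private lemma integ_all (σ : ℝ) (hσ : 0 < σ) :
    Integrable (fun x => gaussianPDFReal 0 ⟨σ ^ 2, sq_nonneg σ⟩ (sfun σ x) * (x / sfun σ x)) := by
  have hpdfc := test σ hσ
  have hscont : Continuous (sfun σ) := Real.continuous_sqrt.comp (by continuity)
  refine Integrable.mono (g := gaussianPDFReal 0 ⟨σ ^ 2, sq_nonneg σ⟩)
    (integrable_gaussianPDFReal 0 _)
    ((hpdfc.comp hscont).mul (continuous_id.div hscont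
      fun x => (sfun_pos σ hσ x).ne')).aestronglyMeasurable (ae_of_all _ ?_)
  intro x
  have hpos := sfun_pos σ hσ x
  have hpdf_nonneg := gaussianPDFReal_nonneg (0:ℝ) (⟨σ ^ 2, sq_nonneg σ⟩ : NNReal) x
  have h1 : |x / sfun σ x| ≤ 1 := by
    rw [abs_div, abs_of_pos hpos, div_le_one hpos]
    rw [← Real.sqrt_sq_eq_abs, sfun]
    exact Real.sqrt_le_sqrt (by nlinarith)
  rw [norm_mul, pdf_sfun σ hσ, Real.norm_eq_abs, Real.norm_eq_abs, Real.norm_eq_abs]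
  calc |Real.exp (-(3/2)) * gaussianPDFReal 0 ⟨σ ^ 2, sq_nonneg σ⟩ x| * |x / sfun σ x|
      ≤ |Real.exp (-(3/2)) * gaussianPDFReal 0 ⟨σ ^ 2, sq_nonneg σ⟩ x| * 1 :=
        mul_le_mul_of_nonneg_left h1 (abs_nonneg _)
    _ = |Real.exp (-(3/2))| * |gaussianPDFReal 0 ⟨σ ^ 2, sq_nonneg σ⟩ x| := by
        rw [mul_one, abs_mul]
    _ ≤ 1 * |gaussianPDFReal 0 ⟨σ ^ 2, sq_nonneg σ⟩ x| := by
        gcongr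
        rw [abs_of_pos (Real.exp_pos _)]
        exact Real.exp_le_one_iff.mpr (by norm_num)
    _ = _ := one_mul _

private lemma key_real (σ : ℝ) (hσ : 0 < σ) (r : ℝ) (hr : σ ≤ r) :
    Real.exp (-(3/2)) * (1/2) * ∫ x in Ioi r, gaussianPDFReal 0 ⟨σ^2, sq_nonneg σ⟩ x
      ≤ ∫ u in Ioi (sfun σ r), gaussianPDFReal 0 ⟨σ^2, sq_nonneg σ⟩ u := by
  rw [← cov_lemma σ hσ r hr, ← MeasureTheory.integral_const_mul]
  refine setIntegral_mono_on
    (((integrable_gaussianPDFReal 0 _).const_mul _).integrableOn)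
    ((integ_all σ hσ).integrableOn) measurableSet_Ioi ?_
  intro x hx
  have hrx : r < x := hx
  have hx0 : 0 < x := lt_of_lt_of_le hσ (le_of_lt (lt_of_le_of_lt hr hrx))
  have hpos := sfun_pos σ hσ x
  have hpdf_nonneg := gaussianPDFReal_nonneg (0:ℝ) (⟨σ ^ 2, sq_nonneg σ⟩ : NNReal) x
  have h12 : (1:ℝ)/2 ≤ x / sfun σ x := by
    rw [le_div_iff₀ hpos]
    have h2x : sfun σ x ≤ 2 * x := by
      rw [sfun, show (2*x) = Real.sqrt ((2*x)^2) by rw [Real.sqrt_sq (by positivity)]]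
      exact Real.sqrt_le_sqrt (by nlinarith)
    linarith
  rw [pdf_sfun σ hσ]
  have h := mul_le_mul_of_nonneg_left h12
    (mul_nonneg (Real.exp_pos (-(3/2))).le hpdf_nonneg)
  calc Real.exp (-(3/2)) * (1/2) * gaussianPDFReal 0 ⟨σ^2, sq_nonneg σ⟩ x
      = (Real.exp (-(3/2)) * gaussianPDFReal 0 ⟨σ^2, sq_nonneg σ⟩ x) * (1/2) := by ring
    _ ≤ (Real.exp (-(3/2)) * gaussianPDFReal 0 ⟨σ^2, sq_nonneg σ⟩ x) * (x / sfun σ x) := h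
    _ = _ := by ring

private lemma exp_bound : (1:ℝ)/20 ≤ (1/4) * Real.exp (-(3/2)) := by
  have h1 := Real.exp_one_lt_d9
  have h3 : Real.exp ((3:ℝ)/2) ^ 2 = Real.exp 1 ^ 3 := by
    rw [← Real.exp_nat_mul, ← Real.exp_nat_mul]; norm_num
  have h2 : Real.exp ((3:ℝ)/2) ^ 2 < 25 := by
    rw [h3]
    calc Real.exp 1 ^ 3 < 2.7182818286 ^ 3 :=
          pow_lt_pow_left₀ h1 (Real.exp_pos 1).le (by norm_num)
      _ < 25 := by norm_num
  have he : Real.exp ((3:ℝ)/2) < 5 := by nlinarith [Real.exp_pos ((3:ℝ)/2)]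
  have hm : Real.exp (-(3/2) : ℝ) * Real.exp ((3:ℝ)/2) = 1 := by
    rw [← Real.exp_add]; norm_num
  nlinarith [Real.exp_pos (-(3/2) : ℝ)]


/-- **Margin condition (Lemma 5, core inequality).**
For `η ~ N(0, σ²)` and every `r ≥ σ`,
`P(η ≥ r + σ²/r) ≥ (1/4)·e^{−3/2}·P(η ≥ r)`; in particular the conditional
probability `P(η ≥ r + σ²/r | η ≥ r)` is at least `1/20`. -/
theorem margin_condition_gaussian
    (σ : ℝ) (hσ : 0 < σ) (r : ℝ) (hr : σ ≤ r) :
    ENNReal.ofReal ((1 / 4) * Real.exp (-(3 / 2))) *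
        (gaussianReal 0 ⟨σ ^ 2, sq_nonneg σ⟩) {x : ℝ | r ≤ x}
      ≤ (gaussianReal 0 ⟨σ ^ 2, sq_nonneg σ⟩) {x : ℝ | r + σ ^ 2 / r ≤ x}
    ∧ (1 / 20 : ENNReal)
      ≤ (gaussianReal 0 ⟨σ ^ 2, sq_nonneg σ⟩) ({x : ℝ | r + σ ^ 2 / r ≤ x} ∩ {x : ℝ | r ≤ x})
          / (gaussianReal 0 ⟨σ ^ 2, sq_nonneg σ⟩) {x : ℝ | r ≤ x} := by
  have hr0 : 0 < r := lt_of_lt_of_le hσ hr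
  have hv : (⟨σ ^ 2, sq_nonneg σ⟩ : NNReal) ≠ 0 := by
    intro h
    have h2 : σ ^ 2 = (0:ℝ) := congrArg NNReal.toReal h
    nlinarith
  have hpdf_nonneg := gaussianPDFReal_nonneg (0:ℝ) (⟨σ ^ 2, sq_nonneg σ⟩ : NNReal)
  -- measure of {x | r ≤ x}
  have hPB : (gaussianReal 0 ⟨σ ^ 2, sq_nonneg σ⟩) {x : ℝ | r ≤ x}
      = ENNReal.ofReal (∫ x in Ioi r, gaussianPDFReal 0 ⟨σ ^ 2, sq_nonneg σ⟩ x) := by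
    rw [gaussianReal_apply_eq_integral 0 hv]
    congr 1
    exact integral_Ici_eq_integral_Ioi
  -- r + σ²/r ≤ √(r² + 3σ²)
  have hle : r + σ ^ 2 / r ≤ sfun σ r := by
    have h1 : σ ^ 2 / r ≤ σ := by rw [div_le_iff₀ hr0]; nlinarith
    have h4 : (0:ℝ) ≤ σ ^ 2 / r := by positivity
    have h3 : σ ^ 2 / r * r = σ ^ 2 := div_mul_cancel₀ _ hr0.ne'
    rw [sfun, show r + σ ^ 2 / r = Real.sqrt ((r + σ ^ 2 / r) ^ 2) by
      rw [Real.sqrt_sq (by positivity)]]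
    exact Real.sqrt_le_sqrt (by nlinarith [mul_self_le_mul_self h4 h1])
  have hPA_ge : ENNReal.ofReal (∫ u in Ioi (sfun σ r),
        gaussianPDFReal 0 ⟨σ ^ 2, sq_nonneg σ⟩ u)
      ≤ (gaussianReal 0 ⟨σ ^ 2, sq_nonneg σ⟩) {x : ℝ | r + σ ^ 2 / r ≤ x} := by
    rw [gaussianReal_apply_eq_integral 0 hv]
    apply ENNReal.ofReal_le_ofReal
    refine setIntegral_mono_set ((integrable_gaussianPDFReal 0 _).integrableOn)
      (ae_of_all _ fun x => hpdf_nonneg x) (HasSubset.Subset.eventuallyLE ?_)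
    intro x hx
    exact le_trans hle (le_of_lt hx)
  have hI_nonneg : (0:ℝ) ≤ ∫ x in Ioi r, gaussianPDFReal 0 ⟨σ ^ 2, sq_nonneg σ⟩ x :=
    setIntegral_nonneg measurableSet_Ioi fun x _ => hpdf_nonneg x
  have part1 : ENNReal.ofReal ((1 / 4) * Real.exp (-(3 / 2))) *
        (gaussianReal 0 ⟨σ ^ 2, sq_nonneg σ⟩) {x : ℝ | r ≤ x}
      ≤ (gaussianReal 0 ⟨σ ^ 2, sq_nonneg σ⟩) {x : ℝ | r + σ ^ 2 / r ≤ x} := by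
    rw [hPB, ← ENNReal.ofReal_mul (by positivity)]
    refine le_trans (le_trans (ENNReal.ofReal_le_ofReal ?_)
      (ENNReal.ofReal_le_ofReal (key_real σ hσ r hr))) hPA_ge
    calc (1 / 4) * Real.exp (-(3 / 2)) *
          ∫ x in Ioi r, gaussianPDFReal 0 ⟨σ ^ 2, sq_nonneg σ⟩ x
        ≤ Real.exp (-(3/2)) * (1/2) *
          ∫ x in Ioi r, gaussianPDFReal 0 ⟨σ ^ 2, sq_nonneg σ⟩ x := by
          apply mul_le_mul_of_nonneg_right _ hI_nonneg
          nlinarith [Real.exp_pos (-(3/2) : ℝ)]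
      _ = _ := rfl
  refine ⟨part1, ?_⟩
  have hsubAB : {x : ℝ | r + σ ^ 2 / r ≤ x} ⊆ {x : ℝ | r ≤ x} := by
    intro x hx
    have : (0:ℝ) ≤ σ ^ 2 / r := by positivity
    exact le_trans (by linarith : r ≤ r + σ ^ 2 / r) hx
  rw [Set.inter_eq_left.mpr hsubAB]
  have hB_ne : (gaussianReal 0 ⟨σ ^ 2, sq_nonneg σ⟩) {x : ℝ | r ≤ x} ≠ 0 := by
    rw [hPB]
    have hpos : 0 < ∫ x in Ioi r, gaussianPDFReal 0 ⟨σ ^ 2, sq_nonneg σ⟩ x := by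
      rw [setIntegral_pos_iff_support_of_nonneg_ae
        (ae_of_all _ fun x => hpdf_nonneg x) ((integrable_gaussianPDFReal 0 _).integrableOn)]
      have hsupp : Function.support (gaussianPDFReal 0 ⟨σ ^ 2, sq_nonneg σ⟩) ∩ Ioi r
          = Ioi r :=
        Set.inter_eq_right.mpr fun x _ => (gaussianPDFReal_pos 0 _ x hv).ne'
      rw [hsupp, Real.volume_Ioi]
      exact ENNReal.zero_lt_top
    simp [ENNReal.ofReal_eq_zero, not_le, hpos]
  have hB_top : (gaussianReal 0 ⟨σ ^ 2, sq_nonneg σ⟩) {x : ℝ | r ≤ x} ≠ ⊤ :=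
    (fun (v : NNReal) => measure_ne_top (gaussianReal 0 v) {x : ℝ | r ≤ x}) ⟨σ ^ 2, sq_nonneg σ⟩
  rw [ENNReal.le_div_iff_mul_le (Or.inl hB_ne) (Or.inl hB_top)]
  have h120 : (1 / 20 : ENNReal) ≤ ENNReal.ofReal ((1 / 4) * Real.exp (-(3 / 2))) := by
    rw [show (1 / 20 : ENNReal) = ENNReal.ofReal (1 / 20) by
      rw [ENNReal.ofReal_div_of_pos (by norm_num)]; norm_num]
    exact ENNReal.ofReal_le_ofReal exp_bound
  calc (1 / 20 : ENNReal) * (gaussianReal 0 ⟨σ ^ 2, sq_nonneg σ⟩) {x : ℝ | r ≤ x}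
      ≤ ENNReal.ofReal ((1 / 4) * Real.exp (-(3 / 2))) *
        (gaussianReal 0 ⟨σ ^ 2, sq_nonneg σ⟩) {x : ℝ | r ≤ x} := mul_le_mul_left h120 _
    _ ≤ _ := part1
end

section
/- Monotonicity of the conditional margin probability (Lemma A.10 of the margin analysis). Let σ > 0, let η be a real random variable with the Gaussian distribution N(0, σ²), and let α > 0. Then the function b ↦ P(η ≥ b + α | η ≥ b) = P(η ≥ b + α)/P(η ≥ b) is nonincreasing in b on ℝ. -/
open MeasureTheory ProbabilityTheory Real Set NNReal

section Aux

variable {σ : ℝ}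

private lemma gauss_cont (v : ℝ≥0) : Continuous (gaussianPDFReal 0 v) := by
  rw [gaussianPDFReal_def]
  fun_prop

/-- Pointwise log-concavity-type inequality for the Gaussian pdf. -/
private lemma gauss_pdf_key (v : ℝ≥0) {b α x : ℝ} (hα : 0 ≤ α) (hx : b + α ≤ x) :
    gaussianPDFReal 0 v b * gaussianPDFReal 0 v x
      ≤ gaussianPDFReal 0 v (b + α) * gaussianPDFReal 0 v (x - α) := by
  simp only [gaussianPDFReal, sub_zero]
  set c : ℝ := (√(2 * π * v))⁻¹ with hc
  have hcpos : 0 ≤ c := by positivity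
  have hexp : rexp (-b ^ 2 / (2 * v)) * rexp (-x ^ 2 / (2 * v))
      ≤ rexp (-(b + α) ^ 2 / (2 * v)) * rexp (-(x - α) ^ 2 / (2 * v)) := by
    rw [← Real.exp_add, ← Real.exp_add]
    refine Real.exp_le_exp.2 ?_
    rcases eq_or_lt_of_le v.coe_nonneg with h0 | h0
    · simp [← h0]
    · rw [← add_div, ← add_div, div_le_div_iff_of_pos_right (by positivity)]
      nlinarith
  calc c * rexp (-b ^ 2 / (2 * v)) * (c * rexp (-x ^ 2 / (2 * v)))
      = c * c * (rexp (-b ^ 2 / (2 * v)) * rexp (-x ^ 2 / (2 * v))) := by ring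
    _ ≤ c * c * (rexp (-(b + α) ^ 2 / (2 * v)) * rexp (-(x - α) ^ 2 / (2 * v))) := by
        exact mul_le_mul_of_nonneg_left hexp (by positivity)
    _ = c * rexp (-(b + α) ^ 2 / (2 * v)) * (c * rexp (-(x - α) ^ 2 / (2 * v))) := by ring
end Aux

/-- **Monotonicity of the conditional margin probability (Lemma A.10).**
For `η ~ N(0, σ²)` and `α > 0`, the conditional probability
`b ↦ P(η ≥ b + α | η ≥ b) = P(η ≥ b + α)/P(η ≥ b)` is nonincreasing in `b`. -/
theorem conditional_margin_probability_antitone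
    (σ : ℝ) (hσ : 0 < σ) (α : ℝ) (hα : 0 < α) :
    Antitone (fun b : ℝ =>
      (gaussianReal 0 ⟨σ ^ 2, sq_nonneg σ⟩) {x : ℝ | b + α ≤ x}
        / (gaussianReal 0 ⟨σ ^ 2, sq_nonneg σ⟩) {x : ℝ | b ≤ x}) := by
  set v : ℝ≥0 := ⟨σ ^ 2, sq_nonneg σ⟩ with hv_def
  have hv : v ≠ 0 := by
    intro h
    have : σ ^ 2 = 0 := congrArg (fun x : ℝ≥0 => (x : ℝ)) h
    nlinarith
  set f : ℝ → ℝ := gaussianPDFReal 0 v with hf_def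
  have hf_cont : Continuous f := gauss_cont v
  have hf_int : Integrable f := integrable_gaussianPDFReal 0 v
  have hf_nonneg : ∀ x, 0 ≤ f x := gaussianPDFReal_nonneg 0 v
  have hf_pos : ∀ x, 0 < f x := fun x => gaussianPDFReal_pos 0 v x hv
  set F : ℝ → ℝ := fun b => ∫ x in Ici b, f x with hF_def
  -- measure in terms of F
  have hμF : ∀ b : ℝ, (gaussianReal 0 v) {x : ℝ | b ≤ x} = ENNReal.ofReal (F b) := by
    intro b
    have : {x : ℝ | b ≤ x} = Ici b := rfl
    rw [this, gaussianReal_apply_eq_integral 0 hv]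
  -- positivity of F
  have hF_pos : ∀ b : ℝ, 0 < F b := by
    intro b
    rw [hF_def]
    rw [setIntegral_pos_iff_support_of_nonneg_ae
      (Filter.Eventually.of_forall fun x => hf_nonneg x) hf_int.integrableOn]
    have : Function.support f ∩ Ici b = Ici b := by
      apply inter_eq_right.2
      intro x _
      exact (hf_pos x).ne'
    rw [this]
    simp
  -- derivative of F
  have hF_deriv : ∀ b : ℝ, HasDerivAt F (-(f b)) b := by
    intro b
    have key : ∀ u : ℝ, F u = F 0 - ∫ x in (0:ℝ)..u, f x := by
      intro u
      have h1 : ∀ c : ℝ, ∫ x in Ici c, f x = (∫ x, f x) - ∫ x in Iic c, f x := by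
        intro c
        rw [integral_Ici_eq_integral_Ioi,
          eq_sub_iff_add_eq, add_comm, intervalIntegral.integral_Iic_add_Ioi hf_int.integrableOn
            hf_int.integrableOn]
      have h2 : (∫ x in Iic u, f x) - ∫ x in Iic (0:ℝ), f x = ∫ x in (0:ℝ)..u, f x :=
        intervalIntegral.integral_Iic_sub_Iic hf_int.integrableOn hf_int.integrableOn
      simp only [hF_def, h1, ← h2]
      ring
    have hD : HasDerivAt (fun u => ∫ x in (0:ℝ)..u, f x) (f b) b :=
      intervalIntegral.integral_hasDerivAt_right hf_int.intervalIntegrable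
        hf_cont.aestronglyMeasurable.stronglyMeasurableAtFilter hf_cont.continuousAt
    have := (hasDerivAt_const b (F 0)).sub hD
    rw [zero_sub] at this
    exact this.congr_of_eventuallyEq (Filter.Eventually.of_forall key)
  -- key inequality : f b * F (b + α) ≤ f (b + α) * F b
  have hkey : ∀ b : ℝ, f b * F (b + α) ≤ f (b + α) * F b := by
    intro b
    have htrans : ∫ x in Ici (b + α), f (x - α) = F b := by
      have h1 : (fun x => (Ici (b + α)).indicator (fun y => f (y - α)) x)
          = fun x => (Ici b).indicator f (x - α) := by
        funext x
        simp only [indicator_apply, mem_Ici, le_sub_iff_add_le, add_comm α b]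
      calc ∫ x in Ici (b + α), f (x - α)
          = ∫ x, (Ici (b + α)).indicator (fun y => f (y - α)) x := by
            rw [integral_indicator measurableSet_Ici]
        _ = ∫ x, (Ici b).indicator f (x - α) := by rw [h1]
        _ = ∫ x, (Ici b).indicator f x := integral_sub_right_eq_self _ α
        _ = F b := integral_indicator measurableSet_Ici
    have hint1 : IntegrableOn (fun x => f b * f x) (Ici (b + α)) volume :=
      (hf_int.const_mul (f b)).integrableOn
    have hint2 : IntegrableOn (fun x => f (b + α) * f (x - α)) (Ici (b + α)) volume := by
      exact ((hf_int.comp_sub_right α).const_mul (f (b + α))).integrableOn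
    calc f b * F (b + α) = ∫ x in Ici (b + α), f b * f x := by
          rw [hF_def, integral_const_mul]
      _ ≤ ∫ x in Ici (b + α), f (b + α) * f (x - α) := by
          refine setIntegral_mono_on hint1 hint2 measurableSet_Ici fun x hx => ?_
          exact gauss_pdf_key v hα.le hx
      _ = f (b + α) * ∫ x in Ici (b + α), f (x - α) := by rw [integral_const_mul]
      _ = f (b + α) * F b := by rw [htrans]
  -- the real ratio is antitone
  set G : ℝ → ℝ := fun b => F (b + α) / F b with hG_def
  have hG_deriv : ∀ b : ℝ, HasDerivAt G
      ((-(f (b + α)) * F b - F (b + α) * -(f b)) / F b ^ 2) b := by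
    intro b
    have h1 : HasDerivAt (fun u : ℝ => F (u + α)) (-(f (b + α))) b := by
      have := (hF_deriv (b + α)).comp b ((hasDerivAt_id b).add_const α)
      rw [mul_one] at this
      exact this
    exact h1.div (hF_deriv b) (hF_pos b).ne'
  have hG_anti : Antitone G := by
    apply antitone_of_deriv_nonpos
    · exact fun b => (hG_deriv b).differentiableAt
    · intro b
      rw [(hG_deriv b).deriv]
      apply div_nonpos_of_nonpos_of_nonneg _ (sq_nonneg _)
      have := hkey b
      nlinarith
  -- transfer to ENNReal
  intro b1 b2 h12
  simp only [hμF]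
  rw [← ENNReal.ofReal_div_of_pos (hF_pos b1), ← ENNReal.ofReal_div_of_pos (hF_pos b2)]
  exact ENNReal.ofReal_le_ofReal (hG_anti h12)
end

section
/- Hoeffding-type inequality for sub-Gaussian martingale differences with predictable coefficients. Let (Ω, F, P) be a probability space with a filtration F_0 ⊆ F_1 ⊆ … ⊆ F_T, let c > 0 and κ > 0, and for t = 1,…,T let Z_t be an F_t-measurable real random variable whose conditional moment generating function satisfies E[exp(s·Z_t) | F_{t−1}] ≤ exp(c·s²·κ²) almost surely for every s ∈ ℝ. Let a_1,…,a_T be real random variables such that a_t is F_{t−1}-measurable with |a_t| ≤ α_t almost surely, for deterministic constants α_1,…,α_T ≥ 0 with Σ_{t=1}^T α_t² > 0. Then for every τ > 0, P( |Σ_{t=1}^T a_t·Z_t| ≥ τ ) ≤ 2·exp( −τ² / (4·c·κ²·Σ_{t=1}^T α_t²) ). -/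
open MeasureTheory ProbabilityTheory Finset



lemma aux_int_mul_exp {Ω : Type*} {mΩ : MeasurableSpace Ω} {P : Measure Ω} {u v : Ω → ℝ}
    (h2u : Integrable (fun ω => Real.exp (2 * u ω)) P)
    (h2v : Integrable (fun ω => Real.exp (2 * v ω)) P)
    (hm : AEStronglyMeasurable (fun ω => Real.exp (u ω) * Real.exp (v ω)) P) :
    Integrable (fun ω => Real.exp (u ω) * Real.exp (v ω)) P := by
  refine Integrable.mono' (((h2u.add h2v)).div_const 2) hm ?_
  filter_upwards with ω
  have h1 : Real.exp (2 * u ω) = Real.exp (u ω) ^ 2 := by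
    rw [two_mul, Real.exp_add, sq]
  have h2 : Real.exp (2 * v ω) = Real.exp (v ω) ^ 2 := by
    rw [two_mul, Real.exp_add, sq]
  simp only [Pi.add_apply]
  rw [Real.norm_eq_abs, abs_of_nonneg (by positivity), h1, h2]
  nlinarith [sq_nonneg (Real.exp (u ω) - Real.exp (v ω))]

lemma aux_pullout {Ω : Type*} {mΩ : MeasurableSpace Ω} {P : Measure Ω}
    [IsProbabilityMeasure P] {m : MeasurableSpace Ω} (hm : m ≤ mΩ)
    {W Y : Ω → ℝ} {K : ℝ}
    (hW : StronglyMeasurable[m] W) (hW0 : 0 ≤ᵐ[P] W) (hWint : Integrable W P)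
    (hY : Integrable Y P) (hWY : Integrable (fun ω => W ω * Y ω) P)
    (hK : ∀ᵐ ω ∂P, (P[Y | m]) ω ≤ K) :
    ∫ ω, W ω * Y ω ∂P ≤ K * ∫ ω, W ω ∂P := by
  have hWY' : Integrable (W * Y) P := hWY
  have h2 : P[W * Y | m] =ᵐ[P] W * P[Y | m] :=
    condExp_mul_of_stronglyMeasurable_left hW hWY' hY
  have hint2 : Integrable (W * P[Y | m]) P := (integrable_condExp).congr h2
  calc ∫ ω, W ω * Y ω ∂P = ∫ ω, (P[W * Y | m]) ω ∂P := (integral_condExp hm).symm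
    _ = ∫ ω, (W * P[Y | m]) ω ∂P := integral_congr_ae h2
    _ ≤ ∫ ω, K * W ω ∂P := by
        refine integral_mono_ae hint2 (hWint.const_mul K) ?_
        filter_upwards [hW0, hK] with ω h0 hk
        simpa [Pi.mul_apply, mul_comm] using mul_le_mul_of_nonneg_left hk h0
    _ = K * ∫ ω, W ω ∂P := integral_const_mul K W

lemma aux_onestep {Ω : Type*} {mΩ : MeasurableSpace Ω} {P : Measure Ω}
    [IsProbabilityMeasure P] {m : MeasurableSpace Ω} (hm : m ≤ mΩ)
    {W b Z : Ω → ℝ} {A K s : ℝ}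
    (hWm : StronglyMeasurable[m] W) (hW0 : ∀ ω, 0 ≤ W ω) (hWint : Integrable W P)
    (hbm : Measurable[m] b) (hbA : ∀ᵐ ω ∂P, |b ω| ≤ A)
    (hYp : Integrable (fun ω => Real.exp ((s * A) * Z ω)) P)
    (hYm : Integrable (fun ω => Real.exp ((-(s * A)) * Z ω)) P)
    (hWYp : Integrable (fun ω => W ω * Real.exp ((s * A) * Z ω)) P)
    (hWYm : Integrable (fun ω => W ω * Real.exp ((-(s * A)) * Z ω)) P)
    (hWbZ : Integrable (fun ω => W ω * Real.exp (s * (b ω * Z ω))) P)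
    (hKp : ∀ᵐ ω ∂P, (P[fun ω' => Real.exp ((s * A) * Z ω') | m]) ω ≤ K)
    (hKm : ∀ᵐ ω ∂P, (P[fun ω' => Real.exp ((-(s * A)) * Z ω') | m]) ω ≤ K) :
    ∫ ω, W ω * Real.exp (s * (b ω * Z ω)) ∂P ≤ K * ∫ ω, W ω ∂P := by
  set l : Ω → ℝ := fun ω => (b ω / A + 1) / 2 with hl
  have hfacts : ∀ᵐ ω ∂P, 0 ≤ l ω ∧ l ω ≤ 1 ∧
      s * (b ω * Z ω) = l ω * ((s * A) * Z ω) + (1 - l ω) * ((-(s * A)) * Z ω) := by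
    filter_upwards [hbA] with ω hb
    rcases eq_or_lt_of_le ((abs_nonneg (b ω)).trans hb) with hA0 | hA0
    · have hb0 : b ω = 0 := abs_eq_zero.mp (le_antisymm (hA0 ▸ hb) (abs_nonneg _))
      refine ⟨by norm_num [hl, hb0], by norm_num [hl, hb0], by simp [hb0, ← hA0]⟩
    · have h1 : -A ≤ b ω := neg_le_of_abs_le hb
      have h2 : b ω ≤ A := le_of_abs_le hb
      have hAne : A ≠ 0 := ne_of_gt hA0
      have hd1 : (-1 : ℝ) ≤ b ω / A := by rw [le_div_iff₀ hA0]; linarith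
      have hd2 : b ω / A ≤ 1 := (div_le_one hA0).mpr h2
      refine ⟨by simp only [hl]; linarith, by simp only [hl]; linarith, ?_⟩
      have hbb : b ω / A * A = b ω := div_mul_cancel₀ _ hAne
      calc s * (b ω * Z ω) = (b ω / A * A) * (s * Z ω) := by rw [hbb]; ring
        _ = l ω * ((s * A) * Z ω) + (1 - l ω) * ((-(s * A)) * Z ω) := by
            simp only [hl]; ring
  -- pointwise convexity bound
  have hptw : ∀ᵐ ω ∂P, W ω * Real.exp (s * (b ω * Z ω)) ≤
      (W ω * l ω) * Real.exp ((s * A) * Z ω)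
        + (W ω * (1 - l ω)) * Real.exp ((-(s * A)) * Z ω) := by
    filter_upwards [hfacts] with ω ⟨hl0, hl1, heq⟩
    have hconv : Real.exp (s * (b ω * Z ω)) ≤
        l ω * Real.exp ((s * A) * Z ω) + (1 - l ω) * Real.exp ((-(s * A)) * Z ω) := by
      rw [heq]
      simpa [smul_eq_mul] using
        convexOn_exp.2 (Set.mem_univ ((s * A) * Z ω)) (Set.mem_univ ((-(s * A)) * Z ω))
          hl0 (by linarith) (by ring)
    calc W ω * Real.exp (s * (b ω * Z ω))
        ≤ W ω * (l ω * Real.exp ((s * A) * Z ω) + (1 - l ω) * Real.exp ((-(s * A)) * Z ω)) :=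
          mul_le_mul_of_nonneg_left hconv (hW0 ω)
      _ = (W ω * l ω) * Real.exp ((s * A) * Z ω)
            + (W ω * (1 - l ω)) * Real.exp ((-(s * A)) * Z ω) := by ring
  -- integrability of pieces
  have hlmeas : Measurable[m] l := ((hbm.div_const A).add_const 1).div_const 2
  have hWl_aesm : AEStronglyMeasurable[mΩ] (fun ω => W ω * l ω) P :=
    ((hWm.mono hm).measurable.mul (hlmeas.mono hm le_rfl)).aestronglyMeasurable
  have hW1l_aesm : AEStronglyMeasurable[mΩ] (fun ω => W ω * (1 - l ω)) P :=
    ((hWm.mono hm).measurable.mul ((measurable_const.sub (hlmeas.mono hm le_rfl)))).aestronglyMeasurable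
  have hbd : ∀ᵐ ω ∂P, (0 ≤ l ω ∧ l ω ≤ 1) := by
    filter_upwards [hfacts] with ω h; exact ⟨h.1, h.2.1⟩
  have hIWl : Integrable (fun ω => W ω * l ω) P := by
    refine hWint.mono' hWl_aesm ?_
    filter_upwards [hbd] with ω ⟨h0, h1⟩
    rw [Real.norm_eq_abs, abs_of_nonneg (mul_nonneg (hW0 ω) h0)]
    nlinarith [hW0 ω]
  have hIW1l : Integrable (fun ω => W ω * (1 - l ω)) P := by
    refine hWint.mono' hW1l_aesm ?_
    filter_upwards [hbd] with ω ⟨h0, h1⟩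
    rw [Real.norm_eq_abs, abs_of_nonneg (mul_nonneg (hW0 ω) (by linarith))]
    nlinarith [hW0 ω]
  have hIWlY : Integrable (fun ω => (W ω * l ω) * Real.exp ((s * A) * Z ω)) P := by
    refine hWYp.mono' (hWl_aesm.mul hYp.aestronglyMeasurable) ?_
    filter_upwards [hbd] with ω ⟨h0, h1⟩
    rw [Real.norm_eq_abs, abs_of_nonneg (mul_nonneg (mul_nonneg (hW0 ω) h0) (Real.exp_nonneg _))]
    exact mul_le_mul_of_nonneg_right (by nlinarith [hW0 ω]) (Real.exp_nonneg _)
  have hIW1lY : Integrable (fun ω => (W ω * (1 - l ω)) * Real.exp ((-(s * A)) * Z ω)) P := by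
    refine hWYm.mono' (hW1l_aesm.mul hYm.aestronglyMeasurable) ?_
    filter_upwards [hbd] with ω ⟨h0, h1⟩
    rw [Real.norm_eq_abs,
      abs_of_nonneg (mul_nonneg (mul_nonneg (hW0 ω) (by linarith)) (Real.exp_nonneg _))]
    exact mul_le_mul_of_nonneg_right (by nlinarith [hW0 ω]) (Real.exp_nonneg _)
  -- main chain
  have hmain : ∫ ω, W ω * Real.exp (s * (b ω * Z ω)) ∂P ≤
      ∫ ω, (W ω * l ω) * Real.exp ((s * A) * Z ω) ∂P
        + ∫ ω, (W ω * (1 - l ω)) * Real.exp ((-(s * A)) * Z ω) ∂P := by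
    rw [← integral_add hIWlY hIW1lY]
    exact integral_mono_ae hWbZ (hIWlY.add hIW1lY) hptw
  have hp1 : ∫ ω, (W ω * l ω) * Real.exp ((s * A) * Z ω) ∂P ≤ K * ∫ ω, W ω * l ω ∂P := by
    refine aux_pullout hm ((hWm.mul (hlmeas.stronglyMeasurable))) ?_ hIWl hYp hIWlY hKp
    filter_upwards [hbd] with ω ⟨h0, _⟩; exact mul_nonneg (hW0 ω) h0
  have hp2 : ∫ ω, (W ω * (1 - l ω)) * Real.exp ((-(s * A)) * Z ω) ∂P
      ≤ K * ∫ ω, W ω * (1 - l ω) ∂P := by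
    refine aux_pullout hm (hWm.mul ((stronglyMeasurable_const.sub hlmeas.stronglyMeasurable))) ?_
      hIW1l hYm hIW1lY hKm
    filter_upwards [hbd] with ω ⟨_, h1⟩; exact mul_nonneg (hW0 ω) (by linarith)
  have hsumW : ∫ ω, W ω * l ω ∂P + ∫ ω, W ω * (1 - l ω) ∂P = ∫ ω, W ω ∂P := by
    rw [← integral_add hIWl hIW1l]
    exact integral_congr_ae (Filter.Eventually.of_forall fun ω => by ring)
  calc ∫ ω, W ω * Real.exp (s * (b ω * Z ω)) ∂P
      ≤ ∫ ω, (W ω * l ω) * Real.exp ((s * A) * Z ω) ∂P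
        + ∫ ω, (W ω * (1 - l ω)) * Real.exp ((-(s * A)) * Z ω) ∂P := hmain
    _ ≤ K * ∫ ω, W ω * l ω ∂P + K * ∫ ω, W ω * (1 - l ω) ∂P := add_le_add hp1 hp2
    _ = K * ∫ ω, W ω ∂P := by rw [← mul_add, hsumW]

lemma aux_chernoff {Ω : Type*} {mΩ : MeasurableSpace Ω} (P : Measure Ω) [IsProbabilityMeasure P]
    (c κ : ℝ) (hc : 0 < c) (hκ : 0 < κ) (S : Ω → ℝ) (AA : ℝ)
    (key : ∀ s : ℝ, Integrable (fun ω => Real.exp (s * S ω)) P ∧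
      ∫ ω, Real.exp (s * S ω) ∂P ≤ Real.exp (c * s ^ 2 * κ ^ 2 * AA))
    (hAApos : 0 < AA) (τ : ℝ) (hτ : 0 < τ) :
    P {ω : Ω | τ ≤ |S ω|}
      ≤ ENNReal.ofReal (2 * Real.exp (-(τ ^ 2 / (4 * c * κ ^ 2 * AA)))) := by
  set t0 := τ / (2 * c * κ ^ 2 * AA) with ht0def
  have hDpos : 0 < 2 * c * κ ^ 2 * AA := by positivity
  have ht0 : 0 < t0 := div_pos hτ hDpos
  have hexp : -t0 * τ + c * t0 ^ 2 * κ ^ 2 * AA = -(τ ^ 2 / (4 * c * κ ^ 2 * AA)) := by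
    rw [ht0def]
    field_simp
    ring
  have hbound1 : (P {ω | τ ≤ S ω}).toReal ≤ Real.exp (-(τ ^ 2 / (4 * c * κ ^ 2 * AA))) := by
    have h := measure_ge_le_exp_mul_mgf (X := S) (μ := P) (t := t0) τ ht0.le (key t0).1
    refine h.trans ?_
    have hmgfS : mgf S P t0 ≤ Real.exp (c * t0 ^ 2 * κ ^ 2 * AA) := (key t0).2
    calc Real.exp (-t0 * τ) * mgf S P t0
        ≤ Real.exp (-t0 * τ) * Real.exp (c * t0 ^ 2 * κ ^ 2 * AA) :=
          mul_le_mul_of_nonneg_left hmgfS (Real.exp_nonneg _)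
      _ = Real.exp (-(τ ^ 2 / (4 * c * κ ^ 2 * AA))) := by rw [← Real.exp_add, hexp]
  have hbound2 : (P {ω | τ ≤ -S ω}).toReal ≤ Real.exp (-(τ ^ 2 / (4 * c * κ ^ 2 * AA))) := by
    have hint : Integrable (fun ω => Real.exp (t0 * -S ω)) P := by
      simpa [neg_mul, mul_neg] using (key (-t0)).1
    have h := measure_ge_le_exp_mul_mgf (X := fun ω => -S ω) (μ := P) (t := t0) τ ht0.le hint
    refine h.trans ?_
    have hmgfS : mgf (fun ω => -S ω) P t0 ≤ Real.exp (c * t0 ^ 2 * κ ^ 2 * AA) := by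
      have h1 : mgf (fun ω => -S ω) P t0 = mgf S P (-t0) := mgf_neg
      have h2 : mgf S P (-t0) ≤ Real.exp (c * (-t0) ^ 2 * κ ^ 2 * AA) := (key (-t0)).2
      rw [h1]
      simpa [neg_sq] using h2
    calc Real.exp (-t0 * τ) * mgf (fun ω => -S ω) P t0
        ≤ Real.exp (-t0 * τ) * Real.exp (c * t0 ^ 2 * κ ^ 2 * AA) :=
          mul_le_mul_of_nonneg_left hmgfS (Real.exp_nonneg _)
      _ = Real.exp (-(τ ^ 2 / (4 * c * κ ^ 2 * AA))) := by rw [← Real.exp_add, hexp]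
  have hsub : {ω : Ω | τ ≤ |S ω|} ⊆ {ω | τ ≤ S ω} ∪ {ω | τ ≤ -S ω} := by
    intro ω h
    simp only [Set.mem_setOf_eq, Set.mem_union] at h ⊢
    exact le_abs.mp h
  have hE := Real.exp_nonneg (-(τ ^ 2 / (4 * c * κ ^ 2 * AA)))
  calc P {ω : Ω | τ ≤ |S ω|} ≤ P ({ω | τ ≤ S ω} ∪ {ω | τ ≤ -S ω}) := measure_mono hsub
    _ ≤ P {ω | τ ≤ S ω} + P {ω | τ ≤ -S ω} := measure_union_le _ _
    _ ≤ ENNReal.ofReal (Real.exp (-(τ ^ 2 / (4 * c * κ ^ 2 * AA))))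
        + ENNReal.ofReal (Real.exp (-(τ ^ 2 / (4 * c * κ ^ 2 * AA)))) :=
        add_le_add ((ENNReal.le_ofReal_iff_toReal_le (measure_ne_top P _) hE).mpr hbound1)
          ((ENNReal.le_ofReal_iff_toReal_le (measure_ne_top P _) hE).mpr hbound2)
    _ = ENNReal.ofReal (2 * Real.exp (-(τ ^ 2 / (4 * c * κ ^ 2 * AA)))) := by
        rw [← ENNReal.ofReal_add hE hE]
        congr 1
        ring

/-- **Hoeffding-type inequality for sub-Gaussian martingale differences with
predictable coefficients (Lemma on dependent Hoeffding bounds).**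
If each `Z t` is `ℱ t`-measurable with conditional MGF bounded by
`exp(c s² κ²)`, and the coefficients `a t` are `ℱ (t−1)`-measurable with
`|a t| ≤ α t` a.s., then
`P(|Σ_t a t · Z t| ≥ τ) ≤ 2 exp(−τ² / (4 c κ² Σ_t α t²))`. -/
theorem hoeffding_subgaussian_mds_adaptive
    {Ω : Type*} {mΩ : MeasurableSpace Ω} (P : Measure Ω) [IsProbabilityMeasure P]
    (T : ℕ) (ℱ : Filtration ℕ mΩ)
    (c κ : ℝ) (hc : 0 < c) (hκ : 0 < κ)
    (Z : ℕ → Ω → ℝ)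
    (hZmeas : ∀ t ∈ Finset.Icc 1 T, Measurable[ℱ t] (Z t))
    (hZint : ∀ t ∈ Finset.Icc 1 T, ∀ s : ℝ,
      Integrable (fun ω => Real.exp (s * Z t ω)) P)
    (hmgf : ∀ t ∈ Finset.Icc 1 T, ∀ s : ℝ,
      ∀ᵐ ω ∂P, (P[fun ω' => Real.exp (s * Z t ω') | ℱ (t - 1)]) ω
        ≤ Real.exp (c * s ^ 2 * κ ^ 2))
    (a : ℕ → Ω → ℝ)
    (hameas : ∀ t ∈ Finset.Icc 1 T, Measurable[ℱ (t - 1)] (a t))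
    (α : ℕ → ℝ) (hα : ∀ t ∈ Finset.Icc 1 T, 0 ≤ α t)
    (habd : ∀ t ∈ Finset.Icc 1 T, ∀ᵐ ω ∂P, |a t ω| ≤ α t)
    (hsum : 0 < ∑ t ∈ Finset.Icc 1 T, α t ^ 2)
    (τ : ℝ) (hτ : 0 < τ) :
    P {ω : Ω | τ ≤ |∑ t ∈ Finset.Icc 1 T, a t ω * Z t ω|}
      ≤ ENNReal.ofReal
          (2 * Real.exp (-(τ ^ 2 / (4 * c * κ ^ 2 * ∑ t ∈ Finset.Icc 1 T, α t ^ 2)))) := by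
  -- ambient measurability of the summands
  have haZmeas : ∀ t ∈ Finset.Icc 1 T, Measurable (fun ω => a t ω * Z t ω) := fun t ht =>
    ((hameas t ht).mono (ℱ.le (t - 1)) le_rfl).mul ((hZmeas t ht).mono (ℱ.le t) le_rfl)
  -- integrability of exp(s * a t * Z t)
  have hintaZ : ∀ t ∈ Finset.Icc 1 T, ∀ s : ℝ,
      Integrable (fun ω => Real.exp (s * (a t ω * Z t ω))) P := by
    intro t ht s
    refine Integrable.mono' ((hZint t ht (|s| * α t)).add (hZint t ht (-(|s| * α t))))
      ((measurable_const.mul (haZmeas t ht)).exp).aestronglyMeasurable ?_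
    filter_upwards [habd t ht] with ω hb
    rw [Real.norm_eq_abs, Real.abs_exp]
    have h1 : s * (a t ω * Z t ω) ≤ |s| * α t * |Z t ω| := by
      calc s * (a t ω * Z t ω) ≤ |s * (a t ω * Z t ω)| := le_abs_self _
        _ = |s| * (|a t ω| * |Z t ω|) := by rw [abs_mul, abs_mul]
        _ ≤ |s| * (α t * |Z t ω|) :=
            mul_le_mul_of_nonneg_left (mul_le_mul_of_nonneg_right hb (abs_nonneg _)) (abs_nonneg s)
        _ = |s| * α t * |Z t ω| := by ring
    have h2 : Real.exp (|s| * α t * |Z t ω|)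
        ≤ Real.exp (|s| * α t * Z t ω) + Real.exp (-(|s| * α t) * Z t ω) := by
      rcases abs_cases (Z t ω) with ⟨h, _⟩ | ⟨h, _⟩
      · rw [h]; exact le_add_of_nonneg_right (Real.exp_nonneg _)
      · rw [h, show |s| * α t * -Z t ω = -(|s| * α t) * Z t ω by ring]
        exact le_add_of_nonneg_left (Real.exp_nonneg _)
    exact le_trans (Real.exp_le_exp.2 h1) h2
  -- the key MGF bound, by induction
  have key : ∀ n, n ≤ T → ∀ s : ℝ,
      Integrable (fun ω => Real.exp (s * ∑ t ∈ Finset.Icc 1 n, a t ω * Z t ω)) P ∧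
      ∫ ω, Real.exp (s * ∑ t ∈ Finset.Icc 1 n, a t ω * Z t ω) ∂P
        ≤ Real.exp (c * s ^ 2 * κ ^ 2 * ∑ t ∈ Finset.Icc 1 n, α t ^ 2) := by
    intro n
    induction n with
    | zero =>
      intro _ s
      rw [show Finset.Icc 1 0 = (∅ : Finset ℕ) from Finset.Icc_eq_empty (by omega)]
      simp
    | succ n ih =>
      intro hn s
      have hn' : n ≤ T := Nat.le_of_succ_le hn
      have ht1 : n + 1 ∈ Finset.Icc 1 T := Finset.mem_Icc.mpr ⟨Nat.succ_le_succ (Nat.zero_le n), hn⟩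
      have hmemT : ∀ t ∈ Finset.Icc 1 n, t ∈ Finset.Icc 1 T := by
        intro t ht; rw [Finset.mem_Icc] at ht ⊢; omega
      -- measurability of the partial sum w.r.t. ℱ n
      have hSm : Measurable[ℱ n] (fun ω => ∑ t ∈ Finset.Icc 1 n, a t ω * Z t ω) := by
        refine Finset.measurable_sum _ fun t ht => ?_
        have h1 : t - 1 ≤ n := by rw [Finset.mem_Icc] at ht; omega
        have h2 : t ≤ n := (Finset.mem_Icc.mp ht).2
        exact (((hameas t (hmemT t ht)).mono (ℱ.mono h1) le_rfl).mul
          ((hZmeas t (hmemT t ht)).mono (ℱ.mono h2) le_rfl))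
      have hSmeas : Measurable (fun ω => ∑ t ∈ Finset.Icc 1 n, a t ω * Z t ω) :=
        hSm.mono (ℱ.le n) le_rfl
      set W : Ω → ℝ := fun ω => Real.exp (s * ∑ t ∈ Finset.Icc 1 n, a t ω * Z t ω) with hWdef
      have hWm : StronglyMeasurable[ℱ n] W := ((measurable_const.mul hSm).exp).stronglyMeasurable
      have hW0 : ∀ ω, 0 ≤ W ω := fun ω => Real.exp_nonneg _
      have hWint : Integrable W P := (ih hn' s).1
      have hW2int : ∀ r : ℝ, Integrable (fun ω => Real.exp (2 * (r * ∑ t ∈ Finset.Icc 1 n, a t ω * Z t ω))) P := by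
        intro r
        have := (ih hn' (2 * r)).1
        simpa [mul_assoc] using this
      set A := α (n + 1) with hAdef
      -- integrability of products
      have hWYp : Integrable (fun ω => W ω * Real.exp ((s * A) * Z (n + 1) ω)) P := by
        refine aux_int_mul_exp (hW2int s) ?_ ?_
        · have := hZint (n + 1) ht1 (2 * (s * A))
          simpa [mul_assoc] using this
        · exact (((measurable_const.mul hSmeas).exp).mul
            ((measurable_const.mul ((hZmeas (n+1) ht1).mono (ℱ.le _) le_rfl)).exp)).aestronglyMeasurable
      have hWYm : Integrable (fun ω => W ω * Real.exp ((-(s * A)) * Z (n + 1) ω)) P := by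
        refine aux_int_mul_exp (hW2int s) ?_ ?_
        · have := hZint (n + 1) ht1 (2 * (-(s * A)))
          simpa [mul_assoc] using this
        · exact (((measurable_const.mul hSmeas).exp).mul
            ((measurable_const.mul ((hZmeas (n+1) ht1).mono (ℱ.le _) le_rfl)).exp)).aestronglyMeasurable
      have hWbZ : Integrable (fun ω => W ω * Real.exp (s * (a (n+1) ω * Z (n+1) ω))) P := by
        refine aux_int_mul_exp (hW2int s) ?_ ?_
        · have := hintaZ (n + 1) ht1 (2 * s)
          simpa [mul_assoc] using this
        · exact (((measurable_const.mul hSmeas).exp).mul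
            ((measurable_const.mul (haZmeas (n+1) ht1)).exp)).aestronglyMeasurable
      -- conditional MGF bounds, with σ-algebra ℱ n
      have hn1 : (n + 1) - 1 = n := Nat.succ_sub_one n
      set K := Real.exp (c * (s * A) ^ 2 * κ ^ 2) with hKdef
      have hKp : ∀ᵐ ω ∂P, (P[fun ω' => Real.exp ((s * A) * Z (n+1) ω') | ℱ n]) ω ≤ K := by
        have := hmgf (n + 1) ht1 (s * A)
        rwa [hn1] at this
      have hKm : ∀ᵐ ω ∂P, (P[fun ω' => Real.exp ((-(s * A)) * Z (n+1) ω') | ℱ n]) ω ≤ K := by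
        have := hmgf (n + 1) ht1 (-(s * A))
        rw [hn1] at this
        simpa [neg_sq] using this
      have hbA : ∀ᵐ ω ∂P, |a (n+1) ω| ≤ A := habd (n + 1) ht1
      have hbm : Measurable[ℱ n] (a (n+1)) := by
        have := hameas (n + 1) ht1; rwa [hn1] at this
      have hstep := aux_onestep (P := P) (ℱ.le n) hWm hW0 hWint hbm hbA
        (hZint (n+1) ht1 (s * A)) (hZint (n+1) ht1 (-(s * A))) hWYp hWYm hWbZ hKp hKm
      -- rewrite the (n+1)-sum
      have hsplit : ∀ ω, Real.exp (s * ∑ t ∈ Finset.Icc 1 (n+1), a t ω * Z t ω)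
          = W ω * Real.exp (s * (a (n+1) ω * Z (n+1) ω)) := by
        intro ω
        rw [Finset.sum_Icc_succ_top (Nat.succ_le_succ (Nat.zero_le n)), hWdef]
        rw [mul_add, Real.exp_add]
      constructor
      · exact hWbZ.congr (Filter.Eventually.of_forall fun ω => (hsplit ω).symm)
      · have hIH := (ih hn' s).2
        calc ∫ ω, Real.exp (s * ∑ t ∈ Finset.Icc 1 (n+1), a t ω * Z t ω) ∂P
            = ∫ ω, W ω * Real.exp (s * (a (n+1) ω * Z (n+1) ω)) ∂P :=
              integral_congr_ae (Filter.Eventually.of_forall hsplit)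
          _ ≤ K * ∫ ω, W ω ∂P := hstep
          _ ≤ K * Real.exp (c * s ^ 2 * κ ^ 2 * ∑ t ∈ Finset.Icc 1 n, α t ^ 2) :=
              mul_le_mul_of_nonneg_left hIH (Real.exp_nonneg _)
          _ = Real.exp (c * s ^ 2 * κ ^ 2 * ∑ t ∈ Finset.Icc 1 (n+1), α t ^ 2) := by
              rw [hKdef, ← Real.exp_add,
                Finset.sum_Icc_succ_top (Nat.succ_le_succ (Nat.zero_le n))]
              congr 1
              ring
  exact aux_chernoff P c κ hc hκ
    (fun ω => ∑ t ∈ Finset.Icc 1 T, a t ω * Z t ω)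
    (∑ t ∈ Finset.Icc 1 T, α t ^ 2) (fun s => key T le_rfl s) hsum τ hτ
end

section
/- Sub-Gaussian norm of the greedily selected Gaussian context (Lemma 2, sub-Gaussian part). There exists an absolute constant c₂ > 0 with the following property. Let p ≥ 1, k ≥ 2, σ > 0, let x_1,…,x_k be independent random vectors in ℝ^p, each with law N(0, σ²·I_{p×p}), and let θ ∈ ℝ^p be a fixed nonzero vector. Let J be the almost-surely unique index maximizing ⟨x_i, θ⟩ over i ∈ {1,…,k}, and set z = x_J. Then for every unit vector w ∈ ℝ^p and every u ≥ 0, P(|⟨z, w⟩| ≥ u) ≤ e·exp( −u²/(c₂·σ²·log k) ); that is, z is a sub-Gaussian random vector with sub-Gaussian norm at most c·σ·√(log k) for an absolute constant c. -/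
open MeasureTheory ProbabilityTheory Finset

open Real
open scoped NNReal ENNReal

section AuxGreedyGaussian

lemma aux_exp_pdf (v : ℝ≥0) (t x : ℝ) :
    Real.exp (t * x) * gaussianPDFReal 0 v x
      = Real.exp (t ^ 2 * v / 2) * gaussianPDFReal (t * v) v x := by
  rcases eq_or_ne v 0 with hv | hv
  · simp [hv, gaussianPDFReal_zero_var]
  have hv' : (v : ℝ) ≠ 0 := by exact_mod_cast hv
  simp only [gaussianPDFReal]
  rw [mul_left_comm, mul_left_comm (Real.exp (t ^ 2 * v / 2)), ← Real.exp_add, ← Real.exp_add]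
  congr 2
  field_simp
  ring

lemma aux_withDensity (v : ℝ≥0) (hv : v ≠ 0) :
    gaussianReal 0 v
      = volume.withDensity (fun x => ((gaussianPDFReal 0 v x).toNNReal : ℝ≥0∞)) := by
  rw [gaussianReal_of_var_ne_zero _ hv]
  rfl

lemma gaussian_integrable_exp (v : ℝ≥0) (hv : v ≠ 0) (t : ℝ) :
    Integrable (fun x => Real.exp (t * x)) (gaussianReal 0 v) := by
  rw [aux_withDensity v hv,
    integrable_withDensity_iff_integrable_smul₀
      ((measurable_gaussianPDFReal 0 v).real_toNNReal).aemeasurable]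
  refine ((integrable_gaussianPDFReal (t * v) v).const_mul (Real.exp (t ^ 2 * v / 2))).congr ?_
  refine ae_of_all _ fun x => ?_
  have h2 : ((gaussianPDFReal 0 v x).toNNReal : ℝ≥0) • Real.exp (t * x)
      = Real.exp (t * x) * gaussianPDFReal 0 v x := by
    rw [NNReal.smul_def, smul_eq_mul, Real.coe_toNNReal _ (gaussianPDFReal_nonneg 0 v x),
      mul_comm]
  show Real.exp (t ^ 2 * ↑v / 2) * gaussianPDFReal (t * ↑v) v x
      = (gaussianPDFReal 0 v x).toNNReal • Real.exp (t * x)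
  rw [h2, aux_exp_pdf]

lemma gaussian_mgf (v : ℝ≥0) (hv : v ≠ 0) (t : ℝ) :
    ∫ x, Real.exp (t * x) ∂(gaussianReal 0 v) = Real.exp (t ^ 2 * v / 2) := by
  rw [aux_withDensity v hv,
    integral_withDensity_eq_integral_smul ((measurable_gaussianPDFReal 0 v).real_toNNReal)]
  have : ∀ x, ((gaussianPDFReal 0 v x).toNNReal : ℝ≥0) • Real.exp (t * x)
      = Real.exp (t ^ 2 * v / 2) * gaussianPDFReal (t * v) v x := by
    intro x
    rw [NNReal.smul_def, Real.coe_toNNReal _ (gaussianPDFReal_nonneg 0 v x), smul_eq_mul,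
      mul_comm, aux_exp_pdf]
  simp_rw [this]
  rw [integral_const_mul, integral_gaussianPDFReal_eq_one _ hv, mul_one]

lemma indep_row {k p : ℕ} {Ω : Type} [MeasurableSpace Ω] {P : Measure Ω}
    {F : Fin k × Fin p → Ω → ℝ}
    (h : iIndepFun F P) (i : Fin k) :
    iIndepFun (fun j => F (i, j)) P := by
  rw [iIndepFun_iff_measure_inter_preimage_eq_mul] at h ⊢
  intro S sets hsets
  have hinj : ∀ a ∈ S, ∀ b ∈ S, ((i, a) : Fin k × Fin p) = (i, b) → a = b :=
    fun a _ b _ hab => congrArg Prod.snd hab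
  have := h (S.image fun j => (i, j)) (sets := fun q => sets q.2)
    (by
      intro q hq
      simp only [Finset.mem_image] at hq
      obtain ⟨j, hj, rfl⟩ := hq
      exact hsets j hj)
  rw [Finset.prod_image hinj] at this
  rw [← this]
  congr 1
  ext ω
  simp only [Set.mem_iInter₂, Finset.mem_image]
  constructor
  · rintro hj q ⟨j, hjS, rfl⟩
    exact hj j hjS
  · intro hq j hj
    exact hq (i, j) ⟨j, hj, rfl⟩

lemma iIndepFun_ae_eq {ι : Type*} [Countable ι] {Ω : Type} [MeasurableSpace Ω] {P : Measure Ω}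
    {f f' : ι → Ω → ℝ}
    (h : iIndepFun f P)
    (hff' : ∀ i, f i =ᵐ[P] f' i) :
    iIndepFun f' P := by
  rw [iIndepFun_iff_measure_inter_preimage_eq_mul] at h ⊢
  intro S sets hsets
  have hae : ∀ᵐ ω ∂P, ∀ i, f i ω = f' i ω := ae_all_iff.mpr hff'
  have h1 : P (⋂ i ∈ S, f' i ⁻¹' sets i) = P (⋂ i ∈ S, f i ⁻¹' sets i) := by
    refine measure_congr (Filter.eventuallyEq_set.mpr ?_)
    filter_upwards [hae] with ω hω
    simp only [Set.mem_iInter, Set.mem_preimage]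
    exact forall₂_congr fun j _ => by rw [hω j]
  have h2 : ∀ i ∈ S, P (f' i ⁻¹' sets i) = P (f i ⁻¹' sets i) := by
    intro i _
    refine measure_congr (Filter.eventuallyEq_set.mpr ?_)
    filter_upwards [hff' i] with ω hω
    simp only [Set.mem_preimage, hω]
  rw [h1, h S hsets]
  exact (Finset.prod_congr rfl h2).symm

end AuxGreedyGaussian

/-- **Sub-Gaussian norm of the greedily selected Gaussian context
(Lemma 2, sub-Gaussian part).**
For i.i.d. contexts `x 1, …, x k` whose coordinates are i.i.d. `N(0, σ²)`, a
fixed nonzero `θ`, and `J` the a.s. unique index maximizing `⟨x i, θ⟩`, the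
selected context `z = x J` satisfies, for every unit vector `w` and `u ≥ 0`,
`P(|⟨z, w⟩| ≥ u) ≤ e · exp(−u² / (c₂ σ² log k))`; i.e. `z` is sub-Gaussian
with norm at most `c σ √(log k)`. -/
theorem greedy_gaussian_context_subgaussian :
    ∃ c₂ : ℝ, 0 < c₂ ∧
      ∀ (p k : ℕ) (hp : 1 ≤ p) (hk : 2 ≤ k) (σ : ℝ), 0 < σ →
        ∀ (Ω : Type) (_ : MeasurableSpace Ω) (P : Measure Ω),
          IsProbabilityMeasure P →
          ∀ x : Fin k → Ω → Fin p → ℝ,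
            iIndepFun
              (fun (q : Fin k × Fin p) ω => x q.1 ω q.2) P →
            (∀ (i : Fin k) (j : Fin p),
              P.map (fun ω => x i ω j) = gaussianReal 0 ⟨σ ^ 2, sq_nonneg σ⟩) →
            ∀ θ : Fin p → ℝ, θ ≠ 0 →
              ∀ J : Ω → Fin k, Measurable J →
                (∀ᵐ ω ∂P, ∀ i : Fin k, i ≠ J ω →
                  (∑ j, x i ω j * θ j) < ∑ j, x (J ω) ω j * θ j) →
                ∀ w : Fin p → ℝ, (∑ j, w j ^ 2) = 1 →
                  ∀ u : ℝ, 0 ≤ u →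
                    P {ω : Ω | u ≤ |∑ j, x (J ω) ω j * w j|}
                      ≤ ENNReal.ofReal
                          (Real.exp 1 *
                            Real.exp (-(u ^ 2 / (c₂ * σ ^ 2 * Real.log k)))) := by
  refine ⟨8, by norm_num, ?_⟩
  intro p k hp hk σ hσ Ω mΩ P hP x hindep hmap θ hθ J hJ hmax w hw u hu
  have hk1 : (1:ℝ) < (k:ℝ) := by
    have : (2:ℝ) ≤ (k:ℝ) := by exact_mod_cast hk
    linarith
  have hlogk : (0:ℝ) < Real.log k := Real.log_pos hk1
  have hs : (0:ℝ) < σ ^ 2 := by positivity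
  by_cases hcase : u ^ 2 ≤ 8 * σ ^ 2 * Real.log k
  · -- trivial case: the bound is at least 1
    have hb : (1:ℝ) ≤ Real.exp 1 * Real.exp (-(u ^ 2 / (8 * σ ^ 2 * Real.log k))) := by
      rw [← Real.exp_add]
      apply Real.one_le_exp
      have := (div_le_one (by positivity : (0:ℝ) < 8 * σ ^ 2 * Real.log k)).mpr hcase
      linarith
    calc P {ω : Ω | u ≤ |∑ j, x (J ω) ω j * w j|} ≤ 1 := prob_le_one
    _ ≤ ENNReal.ofReal (Real.exp 1 * Real.exp (-(u ^ 2 / (8 * σ ^ 2 * Real.log k)))) := by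
        rw [← ENNReal.ofReal_one]; exact ENNReal.ofReal_le_ofReal hb
  -- main case
  push_neg at hcase
  set v : ℝ≥0 := (⟨σ ^ 2, sq_nonneg σ⟩ : ℝ≥0) with hvdef
  have hv : v ≠ 0 := by
    intro h
    have h2 : σ ^ 2 = 0 := congrArg NNReal.toReal h
    exact (pow_ne_zero 2 hσ.ne') h2
  have hvr : (v : ℝ) = σ ^ 2 := rfl
  have haem : ∀ q : Fin k × Fin p, AEMeasurable (fun ω => x q.1 ω q.2) P := by
    intro q
    by_contra hq
    have h0 := Measure.map_of_not_aemeasurable hq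
    rw [hmap q.1 q.2] at h0
    exact (IsProbabilityMeasure.ne_zero (gaussianReal 0 v)) h0
  set x' : Fin k × Fin p → Ω → ℝ := fun q => (haem q).mk _ with hx'def
  have hx'meas : ∀ q, Measurable (x' q) := fun q => (haem q).measurable_mk
  have hx'ae : ∀ q, (fun ω => x q.1 ω q.2) =ᵐ[P] x' q := fun q => (haem q).ae_eq_mk
  have hindep' : iIndepFun x' P :=
    iIndepFun_ae_eq hindep hx'ae
  have hmap' : ∀ q : Fin k × Fin p, P.map (x' q) = gaussianReal 0 v := fun q =>
    (Measure.map_congr (hx'ae q)).symm.trans (hmap q.1 q.2)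
  set Y : Fin k → Fin p → Ω → ℝ := fun i j ω => x' (i, j) ω * w j with hYdef
  have hYmeas : ∀ i j, Measurable (Y i j) := fun i j => (hx'meas (i, j)).mul_const _
  have hYindep : ∀ i, iIndepFun (Y i) P :=
    fun i => (indep_row hindep' i).comp (fun j => (· * w j))
      (fun j => measurable_mul_const _)
  have hYint : ∀ (i : Fin k) (j : Fin p) (t : ℝ),
      Integrable (fun ω => Real.exp (t * Y i j ω)) P := by
    intro i j t
    have hg : Integrable (fun a => Real.exp ((t * w j) * a)) (gaussianReal 0 v) :=
      gaussian_integrable_exp v hv _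
    rw [← hmap' (i, j)] at hg
    have hsm : AEStronglyMeasurable (fun a => Real.exp ((t * w j) * a)) (P.map (x' (i, j))) :=
      (Real.continuous_exp.comp (continuous_const.mul continuous_id)).aestronglyMeasurable
    have h2 := (integrable_map_measure hsm (hx'meas (i, j)).aemeasurable).mp hg
    refine h2.congr (ae_of_all _ fun ω => ?_)
    simp only [Function.comp_apply, hYdef]
    congr 1
    ring
  have hYmgf : ∀ (i : Fin k) (j : Fin p) (t : ℝ),
      mgf (Y i j) P t = Real.exp ((t * w j) ^ 2 * σ ^ 2 / 2) := by
    intro i j t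
    have hsm : AEStronglyMeasurable (fun a => Real.exp ((t * w j) * a)) (P.map (x' (i, j))) :=
      (Real.continuous_exp.comp (continuous_const.mul continuous_id)).aestronglyMeasurable
    have h1 : mgf (Y i j) P t = ∫ ω, Real.exp ((t * w j) * x' (i, j) ω) ∂P := by
      unfold mgf
      refine integral_congr_ae (ae_of_all _ fun ω => ?_)
      simp only [hYdef]
      congr 1
      ring
    rw [h1, ← integral_map (hx'meas (i, j)).aemeasurable hsm, hmap' (i, j),
      gaussian_mgf v hv, hvr]
  have hSint : ∀ (i : Fin k) (t : ℝ),
      Integrable (fun ω => Real.exp (t * (∑ j, Y i j) ω)) P :=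
    fun i t => (hYindep i).integrable_exp_mul_sum (hYmeas i) (fun j _ => hYint i j t)
  have hSmgf : ∀ (i : Fin k) (t : ℝ),
      mgf (∑ j, Y i j) P t = Real.exp (t ^ 2 * σ ^ 2 / 2) := by
    intro i t
    rw [(hYindep i).mgf_sum (hYmeas i) Finset.univ]
    have h2 : ∀ j : Fin p, mgf (Y i j) P t = Real.exp ((t * w j) ^ 2 * σ ^ 2 / 2) :=
      fun j => hYmgf i j t
    rw [Finset.prod_congr rfl (fun j _ => h2 j), ← Real.exp_sum]
    congr 1
    have h3 : ∑ j, (t * w j) ^ 2 * σ ^ 2 / 2 = (t ^ 2 * σ ^ 2 / 2) * ∑ j, w j ^ 2 := by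
      rw [Finset.mul_sum]
      exact Finset.sum_congr rfl fun j _ => by ring
    rw [h3, hw, mul_one]
  set r : ℝ := Real.exp (-(u ^ 2) / (2 * σ ^ 2)) with hrdef
  have hrpos : 0 < r := Real.exp_pos _
  have htail : ∀ i : Fin k, P {ω | u ≤ |(∑ j, Y i j) ω|} ≤ ENNReal.ofReal (2 * r) := by
    intro i
    have hup : (P {ω | u ≤ (∑ j, Y i j) ω}).toReal ≤ r := by
      have h1 := measure_ge_le_exp_mul_mgf (X := ∑ j, Y i j) (μ := P) u
        (t := u / σ ^ 2) (by positivity) (hSint i _)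
      rw [hSmgf] at h1
      refine h1.trans_eq ?_
      rw [← Real.exp_add, hrdef]
      congr 1
      field_simp
      ring
    have hdown : (P {ω | (∑ j, Y i j) ω ≤ -u}).toReal ≤ r := by
      have h1 := measure_le_le_exp_mul_mgf (X := ∑ j, Y i j) (μ := P) (-u)
        (t := -(u / σ ^ 2)) (neg_nonpos.mpr (by positivity)) (hSint i _)
      rw [hSmgf] at h1
      refine h1.trans_eq ?_
      rw [← Real.exp_add, hrdef]
      congr 1
      field_simp
      ring
    have hsub : {ω | u ≤ |(∑ j, Y i j) ω|}
        ⊆ {ω | u ≤ (∑ j, Y i j) ω} ∪ {ω | (∑ j, Y i j) ω ≤ -u} := by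
      intro ω hω
      rw [Set.mem_setOf_eq] at hω
      rw [Set.mem_union, Set.mem_setOf_eq, Set.mem_setOf_eq]
      rcases le_abs.mp hω with h | h
      · exact Or.inl h
      · exact Or.inr (by linarith)
    have e1 : P {ω | u ≤ (∑ j, Y i j) ω} ≤ ENNReal.ofReal r := by
      rw [← ENNReal.ofReal_toReal (measure_ne_top P _)]
      exact ENNReal.ofReal_le_ofReal hup
    have e2 : P {ω | (∑ j, Y i j) ω ≤ -u} ≤ ENNReal.ofReal r := by
      rw [← ENNReal.ofReal_toReal (measure_ne_top P _)]
      exact ENNReal.ofReal_le_ofReal hdown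
    calc P {ω | u ≤ |(∑ j, Y i j) ω|}
        ≤ P ({ω | u ≤ (∑ j, Y i j) ω} ∪ {ω | (∑ j, Y i j) ω ≤ -u}) := measure_mono hsub
      _ ≤ P {ω | u ≤ (∑ j, Y i j) ω} + P {ω | (∑ j, Y i j) ω ≤ -u} := measure_union_le _ _
      _ ≤ ENNReal.ofReal r + ENNReal.ofReal r := add_le_add e1 e2
      _ = ENNReal.ofReal (2 * r) := by
          rw [← ENNReal.ofReal_add hrpos.le hrpos.le]
          congr 1
          ring
  have haeall : ∀ᵐ ω ∂P, ∀ q : Fin k × Fin p, x q.1 ω q.2 = x' q ω := by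
    rw [ae_all_iff]
    exact fun q => hx'ae q
  have hmeq : P {ω : Ω | u ≤ |∑ j, x (J ω) ω j * w j|}
      = P {ω : Ω | u ≤ |∑ j, x' (J ω, j) ω * w j|} := by
    refine measure_congr (Filter.eventuallyEq_set.mpr ?_)
    filter_upwards [haeall] with ω hω
    rw [show (∑ j, x (J ω) ω j * w j) = ∑ j, x' (J ω, j) ω * w j from
      Finset.sum_congr rfl fun j _ => by rw [hω (J ω, j)]]
  have hsub2 : {ω : Ω | u ≤ |∑ j, x' (J ω, j) ω * w j|}
      ⊆ ⋃ i : Fin k, {ω | u ≤ |(∑ j, Y i j) ω|} := by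
    intro ω hω
    refine Set.mem_iUnion.mpr ⟨J ω, ?_⟩
    have hsum : (∑ j, Y (J ω) j) ω = ∑ j, x' (J ω, j) ω * w j := by
      simp [Finset.sum_apply, hYdef]
    show u ≤ |(∑ j, Y (J ω) j) ω|
    rw [hsum]
    exact hω
  -- numeric inequality
  have hL : Real.log 2 ≤ Real.log k := by
    apply Real.log_le_log (by norm_num)
    exact_mod_cast le_trans (by norm_num) hk
  have hlog2 : (0.6931:ℝ) < Real.log 2 := by
    have := Real.log_two_gt_d9
    linarith
  have h8 : 8 * σ ^ 2 * Real.log k < u ^ 2 := hcase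
  have key : (k : ℝ) * (2 * r) ≤ Real.exp (-(u ^ 2 / (8 * σ ^ 2 * Real.log k))) := by
    have hk0 : (0:ℝ) < 2 * (k:ℝ) := by positivity
    have hsplit : (k:ℝ) * (2 * r) = Real.exp (Real.log (2 * (k:ℝ))) * r := by
      rw [Real.exp_log hk0]
      ring
    rw [hsplit, hrdef, ← Real.exp_add, Real.exp_le_exp]
    have hlogeq : Real.log (2 * (k:ℝ)) = Real.log 2 + Real.log k :=
      Real.log_mul (by norm_num) (by positivity)
    have h1 : u ^ 2 / (8 * σ ^ 2 * Real.log k) ≤ u ^ 2 / (4 * σ ^ 2) := by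
      apply div_le_div_of_nonneg_left (sq_nonneg u) (by positivity)
      nlinarith
    have h2 : Real.log k ≤ u ^ 2 / (8 * σ ^ 2) := by
      rw [le_div_iff₀ (by positivity)]
      nlinarith
    have h3 : u ^ 2 / (4 * σ ^ 2) = 2 * (u ^ 2 / (8 * σ ^ 2)) := by ring
    have h4 : -(u ^ 2) / (2 * σ ^ 2) = -(u ^ 2 / (4 * σ ^ 2)) - u ^ 2 / (4 * σ ^ 2) := by ring
    rw [hlogeq]
    linarith
  have hfinal : (k : ℝ) * (2 * r)
      ≤ Real.exp 1 * Real.exp (-(u ^ 2 / (8 * σ ^ 2 * Real.log k))) := by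
    refine key.trans ?_
    nlinarith [Real.exp_pos (-(u ^ 2 / (8 * σ ^ 2 * Real.log k))),
      Real.one_le_exp (by norm_num : (0:ℝ) ≤ 1)]
  rw [hmeq]
  calc P {ω : Ω | u ≤ |∑ j, x' (J ω, j) ω * w j|}
      ≤ P (⋃ i : Fin k, {ω | u ≤ |(∑ j, Y i j) ω|}) := measure_mono hsub2
    _ ≤ ∑ i : Fin k, P {ω | u ≤ |(∑ j, Y i j) ω|} := measure_iUnion_fintype_le _ _
    _ ≤ ∑ _i : Fin k, ENNReal.ofReal (2 * r) := Finset.sum_le_sum fun i _ => htail i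
    _ = (k : ℝ≥0∞) * ENNReal.ofReal (2 * r) := by
        rw [Finset.sum_const, Finset.card_univ, Fintype.card_fin, nsmul_eq_mul]
    _ = ENNReal.ofReal ((k : ℝ) * (2 * r)) := by
        rw [ENNReal.ofReal_mul (Nat.cast_nonneg k), ENNReal.ofReal_natCast]
    _ ≤ ENNReal.ofReal (Real.exp 1 * Real.exp (-(u ^ 2 / (8 * σ ^ 2 * Real.log k)))) :=
        ENNReal.ofReal_le_ofReal hfinal
end
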